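/- Let γ = α^r β^r α^r β^r α^{2r} β^{2r} where α, β are primitive words of equal length m = |α| = |β| with α ≠ β, and r ≥ 2. If two occurrences of γ inside a common ambient word have a conflict-free overlap of size at least (r+1)·m, then the overlap is total (the occurrences coincide). Equivalently, γ is (r+1)·m-aligned. -/

import Mathlib

/-- `wpow w n` is the `n`-fold concatenation (iteration) of the word `w`. -/
def wpow {A : Type*} (w : List A) : ℕ → List A
  | 0 => []
  | n + 1 => w ++ wpow w n

/-- A word is primitive if it cannot be written as `v ^ k` for any `k ≥ 2`. -/
def Primitive {A : Type*} (w : List A) : Prop :=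
  ∀ (v : List A) (k : ℕ), 2 ≤ k → w ≠ wpow v k


/-- A word `w` is `ℓ`-aligned if for every word `p` with `1 ≤ |p| ≤ |w| - ℓ`,
`w` is not a prefix of `p ++ w`. -/
def Aligned {A : Type*} (w : List A) (ℓ : ℕ) : Prop :=
  ∀ p : List A, 1 ≤ p.length → p.length ≤ w.length - ℓ → ¬ w <+: (p ++ w)

section Aux

variable {A : Type*}

lemma wpow_length (w : List A) (n : ℕ) : (wpow w n).length = n * w.length := by
  induction n with
  | zero => simp [wpow]
  | succ n ih => simp [wpow, ih]; ring

lemma wpow_add (w : List A) (a b : ℕ) : wpow w (a + b) = wpow w a ++ wpow w b := by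
  induction a with
  | zero => simp [wpow]
  | succ a ih => simp only [Nat.succ_add, wpow, ih, List.append_assoc]

lemma wpow_one (w : List A) : wpow w 1 = w := by simp [wpow]

lemma wpow_two (w : List A) : wpow w 2 = w ++ w := by simp [wpow]

/-- Two commuting nonempty words are powers of a common word. -/
lemma comm_pow : ∀ (n : ℕ) (u v : List A), u.length + v.length ≤ n → u ≠ [] → v ≠ [] →
    u ++ v = v ++ u → ∃ (w : List A) (a b : ℕ), 1 ≤ a ∧ 1 ≤ b ∧ u = wpow w a ∧ v = wpow w b := by
  intro n
  induction n with
  | zero =>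
    intro u v h hu _ _
    have := List.length_pos_iff.mpr hu
    omega
  | succ n ih =>
    intro u v h hu hv hc
    rcases le_or_gt u.length v.length with hle | hlt
    · have hu1 : 0 < u.length := List.length_pos_iff.mpr hu
      have htake : u = v.take u.length := by
        have h2 := congrArg (List.take u.length) hc
        rwa [List.take_left, List.take_append_of_le_length hle] at h2
      have hv2 : v = u ++ v.drop u.length := by
        conv_lhs => rw [← List.take_append_drop u.length v]
        rw [← htake]
      by_cases hv'e : v.drop u.length = []
      · refine ⟨u, 1, 1, le_rfl, le_rfl, (wpow_one u).symm, ?_⟩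
        rw [hv2, hv'e, List.append_nil, wpow_one]
      · have hlv : v.length = u.length + (v.drop u.length).length := by
          conv_lhs => rw [hv2]
          rw [List.length_append]
        have h3 : u ++ (u ++ v.drop u.length) = (u ++ v.drop u.length) ++ u := by
          conv_lhs => rw [← hv2]
          conv_rhs => rw [← hv2]
          exact hc
        have hc2 : u ++ (u ++ v.drop u.length) = u ++ (v.drop u.length ++ u) :=
          h3.trans (List.append_assoc u _ u)
        have hc' := List.append_cancel_left hc2
        obtain ⟨w, a, b, ha, hb, hwa, hwb⟩ :=
          ih u (v.drop u.length) (by omega) hu hv'e hc'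
        exact ⟨w, a, a + b, ha, by omega, hwa, by rw [hv2, hwb, hwa, ← wpow_add]⟩
    · have hv1 : 0 < v.length := List.length_pos_iff.mpr hv
      have htake : v = u.take v.length := by
        have h2 := congrArg (List.take v.length) hc.symm
        rwa [List.take_left, List.take_append_of_le_length (le_of_lt hlt)] at h2
      have hu2 : u = v ++ u.drop v.length := by
        conv_lhs => rw [← List.take_append_drop v.length u]
        rw [← htake]
      by_cases hu'e : u.drop v.length = []
      · exfalso
        have := congrArg List.length hu2
        rw [List.length_append, hu'e] at this
        simp at this
        omega
      · have hlu : u.length = v.length + (u.drop v.length).length := by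
          conv_lhs => rw [hu2]
          rw [List.length_append]
        have h3 : v ++ (v ++ u.drop v.length) = (v ++ u.drop v.length) ++ v := by
          conv_lhs => rw [← hu2]
          conv_rhs => rw [← hu2]
          exact hc.symm
        have hc2 : v ++ (v ++ u.drop v.length) = v ++ (u.drop v.length ++ v) :=
          h3.trans (List.append_assoc v _ v)
        have hc' := List.append_cancel_left hc2
        obtain ⟨w, a, b, ha, hb, hwa, hwb⟩ :=
          ih v (u.drop v.length) (by omega) hv hu'e hc'
        exact ⟨w, a + b, a, by omega, ha, by rw [hu2, hwb, hwa, ← wpow_add], hwa⟩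

/-- A primitive word is not equal to any of its nontrivial rotations. -/
lemma primitive_no_rot (L : List A) (hL : Primitive L) (s : ℕ) (h1 : 0 < s)
    (h2 : s < L.length) : L.drop s ++ L.take s ≠ L := by
  intro h
  have hu : L.take s ≠ [] := by
    apply List.length_pos_iff.mp
    rw [List.length_take]
    omega
  have hv : L.drop s ≠ [] := by
    apply List.length_pos_iff.mp
    rw [List.length_drop]
    omega
  have hcomm : L.take s ++ L.drop s = L.drop s ++ L.take s := by
    rw [List.take_append_drop, h]
  obtain ⟨w, a, b, ha, hb, hwa, hwb⟩ :=
    comm_pow ((L.take s).length + (L.drop s).length) (L.take s) (L.drop s) le_rfl hu hv hcomm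
  exact hL w (a + b) (by omega)
    (by rw [← List.take_append_drop s L, hwa, hwb, ← wpow_add])

/-- Extracting an aligned sub-run from a run of `w`'s inside a bigger word. -/
lemma seg' (P w S : List A) (n b c : ℕ) (h : b + c ≤ n) :
    ((P ++ (wpow w n ++ S)).drop (P.length + b * w.length)).take (c * w.length) = wpow w c := by
  rw [List.drop_length_add_append]
  have hn : wpow w n = wpow w b ++ (wpow w c ++ wpow w (n - b - c)) := by
    rw [← wpow_add, ← wpow_add]
    congr 1
    omega
  rw [hn, List.append_assoc, ← wpow_length w b, List.drop_left, List.append_assoc,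
    ← wpow_length w c, List.take_left]

/-- A self-overlap equation transfers factors at distance `p.length`. -/
lemma period_factor {γ p t : List A} (hE : γ ++ t = p ++ γ) (pos len : ℕ)
    (h : pos + p.length + len ≤ γ.length) :
    (γ.drop (pos + p.length)).take len = (γ.drop pos).take len := by
  have h1 : (γ ++ t).drop (pos + p.length) = γ.drop (pos + p.length) ++ t := by
    rw [List.drop_append, Nat.sub_eq_zero_of_le (by omega), List.drop_zero]
  have h2 : (p ++ γ).drop (pos + p.length) = γ.drop pos := by
    rw [Nat.add_comm, List.drop_length_add_append]
  calc (γ.drop (pos + p.length)).take len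
      = ((γ.drop (pos + p.length)) ++ t).take len := by
        rw [List.take_append_of_le_length (by rw [List.length_drop]; omega)]
    _ = ((γ ++ t).drop (pos + p.length)).take len := by rw [h1]
    _ = ((p ++ γ).drop (pos + p.length)).take len := by rw [hE]
    _ = (γ.drop pos).take len := by rw [h2]

/-- Core contradiction for a shift that is not a multiple of the block length:
a block `L` gets matched with a proper rotation of itself. -/
lemma engine {γ p t : List A} (hE : γ ++ t = p ++ γ) (L : List A) (hL : Primitive L)
    (m s pos1 pos2 : ℕ) (hm : L.length = m) (hs0 : 0 < s) (hs : s < m)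
    (hpos : pos1 + p.length = pos2 + s)
    (h1 : (γ.drop pos1).take m = L)
    (h2 : (γ.drop pos2).take (2 * m) = L ++ L)
    (hb : pos1 + p.length + m ≤ γ.length) : False := by
  have hper := period_factor hE pos1 m hb
  rw [h1, hpos, ← List.drop_drop] at hper
  have key : ((γ.drop pos2).drop s).take m = L.drop s ++ L.take s := by
    have t0 : (γ.drop pos2).take (s + m) = L ++ L.take s := by
      rw [show (γ.drop pos2).take (s + m) = ((γ.drop pos2).take (2 * m)).take (s + m) from by
        rw [List.take_take, inf_of_le_left (by omega)]]
      rw [h2, show s + m = L.length + s from by rw [hm]; omega, List.take_length_add_append]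
    rw [show ((γ.drop pos2).drop s).take m = ((γ.drop pos2).take (s + m)).drop s from by
      rw [List.drop_take]; congr 1; omega]
    rw [t0, List.drop_append,
      Nat.sub_eq_zero_of_le (show s ≤ L.length from by rw [hm]; omega), List.drop_zero]
  rw [key] at hper
  exact primitive_no_rot L hL s hs0 (by rw [hm]; omega) hper

/-- Core contradiction for a shift that is a multiple of the block length:
two distinct blocks get matched. -/
lemma engine0 {γ p t : List A} (hE : γ ++ t = p ++ γ) (L1 L2 : List A)
    (m pos1 pos2 : ℕ) (hm : L1.length = m)
    (hpos : pos1 + p.length = pos2)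
    (h1 : (γ.drop pos1).take m = L1)
    (h2 : (γ.drop pos2).take m = L2)
    (hb : pos1 + p.length + m ≤ γ.length) : L2 = L1 := by
  have hper := period_factor hE pos1 m hb
  rw [h1, hpos, h2] at hper
  exact hper

end Aux

/-- The word `γ = α^r β^r α^r β^r α^{2r} β^{2r}`, for primitive `α ≠ β` of
equal length and `r ≥ 2`, is `(r+1)·|α|`-aligned: any conflict-free
self-overlap of size at least `(r+1)·|α|` is total. -/
theorem gamma_aligned {A : Type*} (α β : List A) (r : ℕ)
    (hα : Primitive α) (hβ : Primitive β) (hlen : α.length = β.length)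
    (hne : α ≠ β) (hr : 2 ≤ r) :
    Aligned (wpow α r ++ wpow β r ++ wpow α r ++ wpow β r ++
      wpow α (2 * r) ++ wpow β (2 * r)) ((r + 1) * α.length) := by
  intro p hp1 hp2 hpre
  set G : List A := wpow α r ++ wpow β r ++ wpow α r ++ wpow β r ++
      wpow α (2 * r) ++ wpow β (2 * r) with hG
  have hα0 : α ≠ [] := fun h => hα [] 2 le_rfl (by rw [h]; simp [wpow])
  have hm0 : 0 < α.length := List.length_pos_iff.mpr hα0
  have hβm : β.length = α.length := hlen.symm
  obtain ⟨t, hE⟩ := hpre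
  have hGlen : G.length = 8 * r * α.length := by
    rw [hG]
    simp only [List.length_append, wpow_length, hβm]
    ring
  -- the six runs of `G`
  have segF : ∀ b c : ℕ, b + c ≤ r →
      (G.drop (b * α.length)).take (c * α.length) = wpow α c := by
    intro b c hbc
    have hPS : G = ([] : List A) ++ (wpow α r ++ (wpow β r ++ wpow α r ++ wpow β r ++
        wpow α (2 * r) ++ wpow β (2 * r))) := by
      rw [hG]; simp [List.append_assoc]
    have e1 : b * α.length = ([] : List A).length + b * α.length := by simp
    rw [hPS, e1]
    exact seg' _ _ _ r b c hbc
  have segE : ∀ b c : ℕ, b + c ≤ r →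
      (G.drop ((r + b) * α.length)).take (c * α.length) = wpow β c := by
    intro b c hbc
    have hPS : G = wpow α r ++ (wpow β r ++ (wpow α r ++ wpow β r ++
        wpow α (2 * r) ++ wpow β (2 * r))) := by
      rw [hG]; simp [List.append_assoc]
    have e1 : (r + b) * α.length = (wpow α r).length + b * β.length := by
      simp only [wpow_length, hβm]; ring
    have e2 : c * α.length = c * β.length := by rw [hβm]
    rw [hPS, e1, e2]
    exact seg' _ _ _ r b c hbc
  have segC : ∀ b c : ℕ, b + c ≤ r →
      (G.drop ((2 * r + b) * α.length)).take (c * α.length) = wpow α c := by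
    intro b c hbc
    have hPS : G = (wpow α r ++ wpow β r) ++ (wpow α r ++ (wpow β r ++
        wpow α (2 * r) ++ wpow β (2 * r))) := by
      rw [hG]; simp [List.append_assoc]
    have e1 : (2 * r + b) * α.length = (wpow α r ++ wpow β r).length + b * α.length := by
      simp only [List.length_append, wpow_length, hβm]; ring
    rw [hPS, e1]
    exact seg' _ _ _ r b c hbc
  have segD : ∀ b c : ℕ, b + c ≤ r →
      (G.drop ((3 * r + b) * α.length)).take (c * α.length) = wpow β c := by
    intro b c hbc
    have hPS : G = (wpow α r ++ wpow β r ++ wpow α r) ++ (wpow β r ++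
        (wpow α (2 * r) ++ wpow β (2 * r))) := by
      rw [hG]; simp [List.append_assoc]
    have e1 : (3 * r + b) * α.length =
        (wpow α r ++ wpow β r ++ wpow α r).length + b * β.length := by
      simp only [List.length_append, wpow_length, hβm]; ring
    have e2 : c * α.length = c * β.length := by rw [hβm]
    rw [hPS, e1, e2]
    exact seg' _ _ _ r b c hbc
  have segA : ∀ b c : ℕ, b + c ≤ 2 * r →
      (G.drop ((4 * r + b) * α.length)).take (c * α.length) = wpow α c := by
    intro b c hbc
    have hPS : G = (wpow α r ++ wpow β r ++ wpow α r ++ wpow β r) ++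
        (wpow α (2 * r) ++ wpow β (2 * r)) := by
      rw [hG]; simp [List.append_assoc]
    have e1 : (4 * r + b) * α.length =
        (wpow α r ++ wpow β r ++ wpow α r ++ wpow β r).length + b * α.length := by
      simp only [List.length_append, wpow_length, hβm]; ring
    rw [hPS, e1]
    exact seg' _ _ _ (2 * r) b c hbc
  have segB : ∀ b c : ℕ, b + c ≤ 2 * r →
      (G.drop ((6 * r + b) * α.length)).take (c * α.length) = wpow β c := by
    intro b c hbc
    have hPS : G = (wpow α r ++ wpow β r ++ wpow α r ++ wpow β r ++ wpow α (2 * r)) ++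
        (wpow β (2 * r) ++ ([] : List A)) := by
      rw [hG]; simp [List.append_assoc]
    have e1 : (6 * r + b) * α.length =
        (wpow α r ++ wpow β r ++ wpow α r ++ wpow β r ++ wpow α (2 * r)).length
          + b * β.length := by
      simp only [List.length_append, wpow_length, hβm]; ring
    have e2 : c * α.length = c * β.length := by rw [hβm]
    rw [hPS, e1, e2]
    exact seg' _ _ _ (2 * r) b c hbc
  -- arithmetic on the shift
  have hq2 : p.length + (r * α.length + α.length) ≤ 8 * (r * α.length) := by
    have e3 : α.length ≤ r * α.length := by
      have := Nat.mul_le_mul_right α.length (show 1 ≤ r by omega)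
      simpa using this
    have e1 : (r + 1) * α.length = r * α.length + α.length := by ring
    have e2 : 8 * r * α.length = 8 * (r * α.length) := by ring
    rw [hGlen, e1] at hp2
    omega
  have hdm : α.length * (p.length / α.length) + p.length % α.length = p.length :=
    Nat.div_add_mod _ _
  set k := p.length / α.length with hkdef
  set s := p.length % α.length with hsdef
  have hsm : s < α.length := by rw [hsdef]; exact Nat.mod_lt _ hm0
  have hq0 : p.length = α.length * k + s := hdm.symm
  have mkpos : ∀ J c : ℕ, J + k = c → J * α.length + p.length = c * α.length + s := by
    intro J c hc
    rw [hq0, ← hc]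
    ring
  have hb' : ∀ c : ℕ, c + 2 ≤ 8 * r → c * α.length + s + α.length ≤ G.length := by
    intro c hc
    have h1 : (c + 2) * α.length ≤ (8 * r) * α.length := Nat.mul_le_mul_right _ hc
    have e1 : (c + 2) * α.length = c * α.length + α.length + α.length := by ring
    rw [hGlen]
    omega
  have hb0 : ∀ c : ℕ, c + 1 ≤ 8 * r → c * α.length + α.length ≤ G.length := by
    intro c hc
    have h1 : (c + 1) * α.length ≤ (8 * r) * α.length := Nat.mul_le_mul_right _ hc
    have e1 : (c + 1) * α.length = c * α.length + α.length := by ring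
    rw [hGlen]
    omega
  by_cases hs0 : s = 0
  · -- the shift is a multiple of the block length
    have hq0' : p.length = α.length * k := by omega
    have hk1 : 1 ≤ k := by
      rcases Nat.eq_zero_or_pos k with h0 | h
      · rw [h0, Nat.mul_zero] at hq0'; omega
      · exact h
    have hk7 : k + 1 ≤ 7 * r := by
      have h1 : (k + 1) * α.length ≤ (7 * r) * α.length := by
        have e1 : (k + 1) * α.length = α.length * k + α.length := by ring
        have e2 : 8 * (r * α.length) = (7 * r) * α.length + r * α.length := by ring
        omega
      exact Nat.le_of_mul_le_mul_right h1 hm0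
    have mkpos0 : ∀ J c : ℕ, J + k = c → J * α.length + p.length = c * α.length := by
      intro J c hc
      rw [hq0', ← hc]
      ring
    rcases (show k + 1 ≤ 2 * r ∨ (2 * r ≤ k ∧ k + 1 ≤ 4 * r) ∨ (4 * r ≤ k ∧ k + 1 ≤ 5 * r)
        ∨ (5 * r ≤ k ∧ k + 1 ≤ 6 * r) ∨ 6 * r ≤ k from by omega) with h | h | h | h | h
    · -- blocks 6r-1 (α) and 6r-1+k (β)
      obtain ⟨d, hd⟩ : ∃ d, k = 1 + d := ⟨k - 1, by omega⟩
      obtain ⟨e, he⟩ : ∃ e, 2 * r = e + 1 := ⟨2 * r - 1, by omega⟩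
      have h1 := segA e 1 (by omega); rw [one_mul, wpow_one] at h1
      have h2 := segB d 1 (by omega); rw [one_mul, wpow_one] at h2
      have hpos := mkpos0 (4 * r + e) (6 * r + d) (by omega)
      exact hne (engine0 hE α β α.length _ _ rfl hpos h1 h2
        (by rw [hpos]; exact hb0 (6 * r + d) (by omega))).symm
    · -- blocks 4r (α) and 4r+k (β)
      obtain ⟨d, hd⟩ : ∃ d, k = 2 * r + d := ⟨k - 2 * r, by omega⟩
      have h1 := segA 0 1 (by omega); rw [one_mul, wpow_one] at h1
      have h2 := segB d 1 (by omega); rw [one_mul, wpow_one] at h2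
      have hpos := mkpos0 (4 * r + 0) (6 * r + d) (by omega)
      exact hne (engine0 hE α β α.length _ _ rfl hpos h1 h2
        (by rw [hpos]; exact hb0 (6 * r + d) (by omega))).symm
    · -- blocks r (β) and r+k (α)
      obtain ⟨d, hd⟩ : ∃ d, k = 3 * r + d := ⟨k - 3 * r, by omega⟩
      have h1 := segE 0 1 (by omega); rw [one_mul, wpow_one] at h1
      have h2 := segA d 1 (by omega); rw [one_mul, wpow_one] at h2
      have hpos := mkpos0 (r + 0) (4 * r + d) (by omega)
      exact hne (engine0 hE β α α.length _ _ hβm hpos h1 h2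
        (by rw [hpos]; exact hb0 (4 * r + d) (by omega)))
    · -- blocks 2r (α) and 2r+k (β)
      obtain ⟨d, hd⟩ : ∃ d, k = 4 * r + d := ⟨k - 4 * r, by omega⟩
      have h1 := segC 0 1 (by omega); rw [one_mul, wpow_one] at h1
      have h2 := segB d 1 (by omega); rw [one_mul, wpow_one] at h2
      have hpos := mkpos0 (2 * r + 0) (6 * r + d) (by omega)
      exact hne (engine0 hE α β α.length _ _ rfl hpos h1 h2
        (by rw [hpos]; exact hb0 (6 * r + d) (by omega))).symm
    · -- blocks 0 (α) and k (β)
      obtain ⟨d, hd⟩ : ∃ d, k = 6 * r + d := ⟨k - 6 * r, by omega⟩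
      have h1 := segF 0 1 (by omega); rw [one_mul, wpow_one] at h1
      have h2 := segB d 1 (by omega); rw [one_mul, wpow_one] at h2
      have hpos := mkpos0 0 (6 * r + d) (by omega)
      exact hne (engine0 hE α β α.length _ _ rfl hpos h1 h2
        (by rw [hpos]; exact hb0 (6 * r + d) (by omega))).symm
  · -- the shift is not a multiple of the block length
    have hspos : 0 < s := by omega
    have hk7 : k + 2 ≤ 7 * r := by
      have h1 : (k + 1) * α.length < (7 * r) * α.length := by
        have e1 : (k + 1) * α.length = α.length * k + α.length := by ring
        have e2 : 8 * (r * α.length) = (7 * r) * α.length + r * α.length := by ring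
        omega
      have := lt_of_mul_lt_mul_right h1 (Nat.zero_le α.length)
      omega
    rcases (show k + 2 ≤ 2 * r ∨ k + 1 = 2 * r ∨ (2 * r ≤ k ∧ k + 2 ≤ 4 * r)
        ∨ (4 * r ≤ k + 1 ∧ k + 2 ≤ 5 * r) ∨ k + 1 = 5 * r ∨ (5 * r ≤ k ∧ k + 2 ≤ 7 * r)
        from by omega) with h | h | h | h | h | h
    · -- block 4r (α) into run [4r+k, 4r+k+1] (αα)
      have h1 := segA 0 1 (by omega); rw [one_mul, wpow_one] at h1
      have h2 := segA k 2 (by omega); rw [wpow_two] at h2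
      have hpos := mkpos (4 * r + 0) (4 * r + k) (by omega)
      exact engine hE α hα α.length s _ _ rfl hspos hsm hpos h1 h2
        (by rw [hpos]; exact hb' (4 * r + k) (by omega))
    · -- block 2r+1 (α) into run [4r, 4r+1] (αα)
      have h1 := segC 1 1 (by omega); rw [one_mul, wpow_one] at h1
      have h2 := segA 0 2 (by omega); rw [wpow_two] at h2
      have hpos := mkpos (2 * r + 1) (4 * r + 0) (by omega)
      exact engine hE α hα α.length s _ _ rfl hspos hsm hpos h1 h2
        (by rw [hpos]; exact hb' (4 * r + 0) (by omega))
    · -- block 2r (α) into run [2r+k, 2r+k+1] (αα)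
      obtain ⟨d, hd⟩ : ∃ d, k = 2 * r + d := ⟨k - 2 * r, by omega⟩
      have h1 := segC 0 1 (by omega); rw [one_mul, wpow_one] at h1
      have h2 := segA d 2 (by omega); rw [wpow_two] at h2
      have hpos := mkpos (2 * r + 0) (4 * r + d) (by omega)
      exact engine hE α hα α.length s _ _ rfl hspos hsm hpos h1 h2
        (by rw [hpos]; exact hb' (4 * r + d) (by omega))
    · -- block 3r (β) into run [3r+k, 3r+k+1] (ββ)
      obtain ⟨d, hd⟩ : ∃ d, k = 3 * r + d := ⟨k - 3 * r, by omega⟩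
      have h1 := segD 0 1 (by omega); rw [one_mul, wpow_one] at h1
      have h2 := segB d 2 (by omega); rw [wpow_two] at h2
      have hpos := mkpos (3 * r + 0) (6 * r + d) (by omega)
      exact engine hE β hβ α.length s _ _ hβm hspos hsm hpos h1 h2
        (by rw [hpos]; exact hb' (6 * r + d) (by omega))
    · -- block r+1 (β) into run [6r, 6r+1] (ββ)
      have h1 := segE 1 1 (by omega); rw [one_mul, wpow_one] at h1
      have h2 := segB 0 2 (by omega); rw [wpow_two] at h2
      have hpos := mkpos (r + 1) (6 * r + 0) (by omega)
      exact engine hE β hβ α.length s _ _ hβm hspos hsm hpos h1 h2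
        (by rw [hpos]; exact hb' (6 * r + 0) (by omega))
    · -- block r (β) into run [r+k, r+k+1] (ββ)
      obtain ⟨d, hd⟩ : ∃ d, k = 5 * r + d := ⟨k - 5 * r, by omega⟩
      have h1 := segE 0 1 (by omega); rw [one_mul, wpow_one] at h1
      have h2 := segB d 2 (by omega); rw [wpow_two] at h2
      have hpos := mkpos (r + 0) (6 * r + d) (by omega)
      exact engine hE β hβ α.length s _ _ hβm hspos hsm hpos h1 h2
        (by rw [hpos]; exact hb' (6 * r + d) (by omega))
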